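/- Let ι be a finite type and p, q : ι → ℝ with p(i) > 0 and q(i) > 0 for all i. Then ∑_i ( p(i)·log(p(i)/(p(i)+q(i))) + q(i)·log(q(i)/(p(i)+q(i))) ) is the greatest value of ∑_i ( p(i)·log(D(i)) + q(i)·log(1−D(i)) ) over all functions D : ι → ℝ with D(i) ∈ (0,1) for every i; that is, IsGreatest { ∑ i, (p i * Real.log (D i) + q i * Real.log (1 − D i)) | D : ι → ℝ, ∀ i, D i ∈ Set.Ioo 0 1 } (∑ i, (p i * Real.log (p i/(p i + q i)) + q i * Real.log (q i/(p i + q i)))), with the maximum attained at D(i) = p(i)/(p(i)+q(i)). -/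

import Mathlib

lemma pointwise_opt (a b x : ℝ) (ha : 0 < a) (hb : 0 < b) (hx : x ∈ Set.Ioo (0:ℝ) 1) :
    a * Real.log x + b * Real.log (1 - x) ≤
      a * Real.log (a / (a + b)) + b * Real.log (b / (a + b)) := by
  obtain ⟨hx0, hx1⟩ := hx
  have hs : 0 < a + b := by linarith
  have h1x : 0 < 1 - x := by linarith
  have h1 : Real.log x - Real.log (a / (a + b)) = Real.log (x * (a + b) / a) := by
    rw [Real.log_div (by positivity) ha.ne', Real.log_mul hx0.ne' hs.ne',
      Real.log_div ha.ne' hs.ne']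
    ring
  have h2 : Real.log (1 - x) - Real.log (b / (a + b)) =
      Real.log ((1 - x) * (a + b) / b) := by
    rw [Real.log_div (by positivity) hb.ne', Real.log_mul h1x.ne' hs.ne',
      Real.log_div hb.ne' hs.ne']
    ring
  have l1 : Real.log (x * (a + b) / a) ≤ x * (a + b) / a - 1 :=
    Real.log_le_sub_one_of_pos (by positivity)
  have l2 : Real.log ((1 - x) * (a + b) / b) ≤ (1 - x) * (a + b) / b - 1 :=
    Real.log_le_sub_one_of_pos (by positivity)
  have key : a * (Real.log x - Real.log (a / (a + b))) +
      b * (Real.log (1 - x) - Real.log (b / (a + b))) ≤ 0 := by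
    rw [h1, h2]
    have e1 : a * (x * (a + b) / a - 1) = x * (a + b) - a := by field_simp
    have e2 : b * ((1 - x) * (a + b) / b - 1) = (1 - x) * (a + b) - b := by field_simp
    nlinarith [mul_le_mul_of_nonneg_left l1 ha.le, mul_le_mul_of_nonneg_left l2 hb.le]
  nlinarith [key]

theorem optimal_discriminator_sum
    {ι : Type*} [Fintype ι] (p q : ι → ℝ) (hp : ∀ i, 0 < p i) (hq : ∀ i, 0 < q i) :
    IsGreatest
        {x : ℝ | ∃ D : ι → ℝ, (∀ i, D i ∈ Set.Ioo (0 : ℝ) 1) ∧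
          x = ∑ i, (p i * Real.log (D i) + q i * Real.log (1 - D i))}
        (∑ i, (p i * Real.log (p i / (p i + q i)) +
          q i * Real.log (q i / (p i + q i)))) ∧
      ∑ i, (p i * Real.log (p i / (p i + q i)) +
          q i * Real.log (1 - p i / (p i + q i))) =
        ∑ i, (p i * Real.log (p i / (p i + q i)) +
          q i * Real.log (q i / (p i + q i))) := by
  have hmem : ∀ i, p i / (p i + q i) ∈ Set.Ioo (0:ℝ) 1 := fun i => by
    have hpi := hp i; have hqi := hq i
    constructor
    · positivity
    · rw [div_lt_one (by linarith)]; linarith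
  have hcompl : ∀ i, 1 - p i / (p i + q i) = q i / (p i + q i) := fun i => by
    have hpi := hp i; have hqi := hq i
    field_simp
    ring
  constructor
  · constructor
    · exact ⟨fun i => p i / (p i + q i), hmem, by
        simp only [hcompl]⟩
    · rintro x ⟨D, hD, rfl⟩
      exact Finset.sum_le_sum fun i _ => pointwise_opt (p i) (q i) (D i) (hp i) (hq i) (hD i)
  · exact Finset.sum_congr rfl fun i _ => by rw [hcompl]
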